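/- arXiv:1111.1338 — 10 statements merged into one kernel-verified Lean document; each statement's English description precedes it below -/
import Mathlib

section
/- Let R be a (not necessarily commutative) ring and let N, L, L1, M, N1, L2, M1 ∈ R satisfy N*L = L1*M and N1*L1 = L2*M1. Then for all A, B ∈ R one has (N1 + L2*B)*(N + L1*A)*L = L2*(M1*M + C*L), where C = M1*A + B*L1*A + B*N. (Correctness of composition of two Darboux transformations with expansion: the composed transformation's operator lies in the same expansion-equivalence class as M1*M.) -/
/-- Correctness of composition of two Darboux transformations with expansion:
if `N*L = L1*M` and `N1*L1 = L2*M1`, then for all `A, B`,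
`(N1 + L2*B)*(N + L1*A)*L = L2*(M1*M + C*L)` with `C = M1*A + B*L1*A + B*N`. -/
theorem composition_with_expansion {R : Type*} [Ring R]
    (N L L1 M N1 L2 M1 : R)
    (h : N * L = L1 * M) (h1 : N1 * L1 = L2 * M1) (A B : R) :
    (N1 + L2 * B) * (N + L1 * A) * L
      = L2 * (M1 * M + (M1 * A + B * L1 * A + B * N) * L) := by
  have e : N1 * (N * L) = L2 * (M1 * M) := by rw [h, ← mul_assoc, h1, mul_assoc]
  have key : (N1 + L2 * B) * (N + L1 * A) * L
      = N1 * (N * L) + (N1 * L1) * (A * L) + L2 * B * (N * L) + L2 * (B * L1 * A * L) := by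
    noncomm_ring
  rw [key, e, h1]
  noncomm_ring
end

section
/- Let a, b, c, q, r ∈ K with q ≠ 0, and suppose the two equations of system (S) hold: (S1) −q·r_x + q²·r_y + q_x·r − b·q_x + b_x·q + q²·(b_y − a·q_y − a_x) − q³·a_y + q_y·q_x − q_xy·q = 0, and (S2) −c·q_x + (c − a·r)·q_y·q + (a·r + r_y)·q_x + (c_y − r·a_y)·q² + (r·r_y − a·r_x − r_y·b − r_xy − r·a_x + c_x)·q = 0. Then there exist a1, b1, c1 ∈ K such that for all ψ ∈ K: N(L(ψ)) = L1(M(ψ)), where L(ψ) = ψ_xy + a·ψ_x + b·ψ_y + c·ψ, M(ψ) = ψ_x + q·ψ_y + r·ψ, N(ψ) = ψ_x + q·ψ_y + (r − q_x/q + q_y)·ψ, and L1(ψ) = ψ_xy + a1·ψ_x + b1·ψ_y + c1·ψ. (Sufficiency of system (S) for the existence of a Darboux transformation with M of bi-degree (1,1); moreover the auxiliary operator is N = M − (ln q)_x + q_y.) -/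
/-- Sufficiency of system (S) for the existence of a Darboux transformation
with `M` of bi-degree (1,1); the auxiliary operator is
`N = M − (ln q)_x + q_y`, i.e. `N = D_x + q D_y + (r − q_x/q + q_y)`. -/
theorem darboux_exists_of_system {K : Type*} [Field K] [CharZero K]
    (X Y : Derivation ℚ K K) (hcomm : ∀ f : K, X (Y f) = Y (X f))
    (a b c q r : K) (hq : q ≠ 0)
    (hS1 : -q * X r + q ^ 2 * Y r + X q * r - b * X q + X b * q
        + q ^ 2 * (Y b - a * Y q - X a) - q ^ 3 * Y a + Y q * X q
        - X (Y q) * q = 0)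
    (hS2 : -c * X q + (c - a * r) * Y q * q + (a * r + Y r) * X q
        + (Y c - r * Y a) * q ^ 2
        + (r * Y r - a * X r - Y r * b - X (Y r) - r * X a + X c) * q = 0)
    (L M N : K → K)
    (hL : ∀ ψ : K, L ψ = X (Y ψ) + a * X ψ + b * Y ψ + c * ψ)
    (hM : ∀ ψ : K, M ψ = X ψ + q * Y ψ + r * ψ)
    (hN : ∀ ψ : K, N ψ = X ψ + q * Y ψ + (r - X q / q + Y q) * ψ) :
    ∃ a1 b1 c1 : K, ∀ ψ : K,
      N (L ψ) = X (Y (M ψ)) + a1 * X (M ψ) + b1 * Y (M ψ) + c1 * M ψ := by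
  refine ⟨a, b - X q / q, X a + q * Y a + a * Y q - a * (X q / q) + c - Y r, ?_⟩
  intro ψ
  have hdiv : X q / q * q = X q := div_mul_cancel₀ _ hq
  rw [hN]
  simp only [hL, hM]
  simp only [map_add, Derivation.leibniz, smul_eq_mul]
  simp only [hcomm] at hS1 hS2 ⊢
  refine mul_left_cancel₀ hq ?_
  linear_combination (Y ψ) * hS1 + ψ * hS2
    + (a * r * ψ + a * q * Y ψ - b * Y ψ - c * ψ + Y r * ψ + Y q * Y ψ + r * Y ψ
        + q * Y (Y ψ)) * hdiv
end

section
/- Let a, b, c ∈ K, let L act on K by L(ψ) = ψ_xy + a·ψ_x + b·ψ_y + c·ψ, and let ψ1, ψ2 ∈ K satisfy L(ψ1) = 0 and L(ψ2) = 0. Set d = −ψ1·(ψ2)_y + ψ2·(ψ1)_y, α = ψ1·(ψ2)_x − ψ2·(ψ1)_x, β = −(ψ2)_x·(ψ1)_y + (ψ2)_y·(ψ1)_x, and assume d ≠ 0. Then q := α/d and r := β/d satisfy both equations of system (S): (S1) −q·r_x + q²·r_y + q_x·r − b·q_x + b_x·q + q²·(b_y − a·q_y − a_x) − q³·a_y +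 q_y·q_x − q_xy·q = 0, and (S2) −c·q_x + (c − a·r)·q_y·q + (a·r + r_y)·q_x + (c_y − r·a_y)·q² + (r·r_y − a·r_x − r_y·b − r_xy − r·a_x + c_x)·q = 0. (Darboux's Wronskian formula gives a Darboux transformation of bi-degree (1,1).) -/
set_option maxHeartbeats 2000000 in
set_option maxRecDepth 40000 in
/-- Darboux's Wronskian formula gives a Darboux transformation of
bi-degree (1,1): with `q = α/d` and `r = β/d` built from two solutions
`ψ1, ψ2` of `L ψ = 0`, both equations of system (S) hold. -/
theorem wronskian_solves_system {K : Type*} [Field K] [CharZero K]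
    (X Y : Derivation ℚ K K) (hcomm : ∀ f : K, X (Y f) = Y (X f))
    (a b c : K) (L : K → K)
    (hL : ∀ ψ : K, L ψ = X (Y ψ) + a * X ψ + b * Y ψ + c * ψ)
    (ψ1 ψ2 : K) (h1 : L ψ1 = 0) (h2 : L ψ2 = 0)
    (d α β q r : K)
    (hd : d = -ψ1 * Y ψ2 + ψ2 * Y ψ1) (hdne : d ≠ 0)
    (hα : α = ψ1 * X ψ2 - ψ2 * X ψ1)
    (hβ : β = -(X ψ2) * Y ψ1 + Y ψ2 * X ψ1)
    (hq : q = α / d) (hr : r = β / d) :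
    (-q * X r + q ^ 2 * Y r + X q * r - b * X q + X b * q
        + q ^ 2 * (Y b - a * Y q - X a) - q ^ 3 * Y a + Y q * X q
        - X (Y q) * q = 0) ∧
    (-c * X q + (c - a * r) * Y q * q + (a * r + Y r) * X q
        + (Y c - r * Y a) * q ^ 2
        + (r * Y r - a * X r - Y r * b - X (Y r) - r * X a + X c) * q = 0) := by
  have e1 : X (Y ψ1) = -(a * X ψ1 + b * Y ψ1 + c * ψ1) := by
    have h := hL ψ1; rw [h1] at h; linear_combination -h
  have e2 : X (Y ψ2) = -(a * X ψ2 + b * Y ψ2 + c * ψ2) := by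
    have h := hL ψ2; rw [h2] at h; linear_combination -h
  have hXyy1 : X (Y (Y ψ1)) = ((-1 : K) * (Y (Y ψ1)) * b + (-1 : K) * (Y ψ1) * (Y b) + (-1 : K) * (Y ψ1) * c + (Y ψ1) * a * b + (-1 : K) * (X ψ1) * (Y a) + (X ψ1) * a ^ 2 + (-1 : K) * ψ1 * (Y c) + ψ1 * a * c) := by
    rw [hcomm (Y ψ1), e1]
    simp only [map_neg, map_add, Derivation.leibniz, smul_eq_mul]
    rw [← hcomm ψ1, e1]; ring
  have hXyy2 : X (Y (Y ψ2)) = ((-1 : K) * (Y (Y ψ2)) * b + (-1 : K) * (Y ψ2) * (Y b) + (-1 : K) * (Y ψ2) * c + (Y ψ2) * a * b + (-1 : K) * (X ψ2) * (Y a) + (X ψ2) * a ^ 2 + (-1 : K) * ψ2 * (Y c) + ψ2 * a * c) := by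
    rw [hcomm (Y ψ2), e2]
    simp only [map_neg, map_add, Derivation.leibniz, smul_eq_mul]
    rw [← hcomm ψ2, e2]; ring
  have hXd : X d = ((X ψ2) * (Y ψ1) + (-1 : K) * (X ψ1) * (Y ψ2) + (-1 : K) * ψ2 * (Y ψ1) * b + (-1 : K) * ψ2 * (X ψ1) * a + ψ1 * (Y ψ2) * b + ψ1 * (X ψ2) * a) := by
    rw [hd]
    simp only [map_add, map_neg, map_sub, Derivation.leibniz, smul_eq_mul]
    rw [e1, e2]; ring
  have hYd : Y d = (ψ2 * (Y (Y ψ1)) + (-1 : K) * ψ1 * (Y (Y ψ2))) := by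
    rw [hd]
    simp only [map_add, map_neg, map_sub, Derivation.leibniz, smul_eq_mul]
    ring
  have G1 : q * d = ((-1 : K) * ψ2 * (X ψ1) + ψ1 * (X ψ2)) := by
    rw [hq, div_mul_cancel₀ _ hdne, hα]; ring
  have G2 : r * d = ((-1 : K) * (X ψ2) * (Y ψ1) + (X ψ1) * (Y ψ2)) := by
    rw [hr, div_mul_cancel₀ _ hdne, hβ]; ring
  have R3 : X q * d = ((-1 : K) * ψ2 * (X (X ψ1)) + ψ1 * (X (X ψ2))) - q * ((X ψ2) * (Y ψ1) + (-1 : K) * (X ψ1) * (Y ψ2) + (-1 : K) * ψ2 * (Y ψ1) * b + (-1 : K) * ψ2 * (X ψ1) * a + ψ1 * (Y ψ2) * b + ψ1 * (X ψ2) * a) := by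
    have h : X (q * d) = X (((-1 : K) * ψ2 * (X ψ1) + ψ1 * (X ψ2))) := by rw [G1]
    simp only [map_add, map_neg, map_sub, Derivation.leibniz, smul_eq_mul,
      Derivation.map_one_eq_zero, neg_zero, mul_zero, zero_mul, add_zero, zero_add] at h
    rw [hXd] at h
    linear_combination h
  have R4 : Y q * d = ((X ψ2) * (Y ψ1) + (-1 : K) * (X ψ1) * (Y ψ2) + ψ2 * (Y ψ1) * b + ψ2 * (X ψ1) * a + (-1 : K) * ψ1 * (Y ψ2) * b + (-1 : K) * ψ1 * (X ψ2) * a) - q * (ψ2 * (Y (Y ψ1)) + (-1 : K) * ψ1 * (Y (Y ψ2))) := by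
    have h : Y (q * d) = Y (((-1 : K) * ψ2 * (X ψ1) + ψ1 * (X ψ2))) := by rw [G1]
    simp only [map_add, map_neg, map_sub, Derivation.leibniz, smul_eq_mul,
      Derivation.map_one_eq_zero, neg_zero, mul_zero, zero_mul, add_zero, zero_add] at h
    rw [← hcomm ψ1, ← hcomm ψ2, e1, e2, hYd] at h
    linear_combination h
  have R5 : X r * d = ((Y ψ2) * (X (X ψ1)) + (-1 : K) * (Y ψ1) * (X (X ψ2)) + (X ψ2) * (Y ψ1) * b + (-1 : K) * (X ψ1) * (Y ψ2) * b + (-1 : K) * ψ2 * (X ψ1) * c + ψ1 * (X ψ2) * c) - r * ((X ψ2) * (Y ψ1) + (-1 : K) * (X ψ1) * (Y ψ2) + (-1 : K) * ψ2 * (Y ψ1) * b + (-1 : K) * ψ2 * (X ψ1) * a + ψ1 * (Y ψ2) * b + ψ1 * (X ψ2) * a) := by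
    have h : X (r * d) = X (((-1 : K) * (X ψ2) * (Y ψ1) + (X ψ1) * (Y ψ2))) := by rw [G2]
    simp only [map_add, map_neg, map_sub, Derivation.leibniz, smul_eq_mul,
      Derivation.map_one_eq_zero, neg_zero, mul_zero, zero_mul, add_zero, zero_add] at h
    rw [e1, e2, hXd] at h
    linear_combination h
  have R6 : Y r * d = ((-1 : K) * (X ψ2) * (Y (Y ψ1)) + (X ψ2) * (Y ψ1) * a + (X ψ1) * (Y (Y ψ2)) + (-1 : K) * (X ψ1) * (Y ψ2) * a + ψ2 * (Y ψ1) * c + (-1 : K) * ψ1 * (Y ψ2) * c) - r * (ψ2 * (Y (Y ψ1)) + (-1 : K) * ψ1 * (Y (Y ψ2))) := by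
    have h : Y (r * d) = Y (((-1 : K) * (X ψ2) * (Y ψ1) + (X ψ1) * (Y ψ2))) := by rw [G2]
    simp only [map_add, map_neg, map_sub, Derivation.leibniz, smul_eq_mul,
      Derivation.map_one_eq_zero, neg_zero, mul_zero, zero_mul, add_zero, zero_add] at h
    rw [← hcomm ψ1, ← hcomm ψ2, e1, e2, hYd] at h
    linear_combination h
  have R7 : X (Y q) * d = ((-1 : K) * (Y ψ2) * (X (X ψ1)) + (Y ψ1) * (X (X ψ2)) + ψ2 * (X (X ψ1)) * a + ψ2 * (Y ψ1) * (X b) + (-1 : K) * ψ2 * (Y ψ1) * b ^ 2 + ψ2 * (X ψ1) * (X a) + ψ2 * (X ψ1) * c + (-1 : K) * ψ2 * (X ψ1) * a * b + (-1 : K) * ψ1 * (X (X ψ2)) * a + (-1 : K) * ψ1 * (Y ψ2) * (X b) + ψ1 * (Y ψ2) * b ^ 2 + (-1 : K) * ψ1 * (X ψ2) * (X a) + (-1 : K) * ψ1 * (X ψ2) * c + ψ1 * (X ψ2) * a * b) - Y q * ((X ψ2) * (Y ψ1) + (-1 : K) * (X ψ1) * (Y ψ2) + (-1 : K) * ψ2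 * (Y ψ1) * b + (-1 : K) * ψ2 * (X ψ1) * a + ψ1 * (Y ψ2) * b + ψ1 * (X ψ2) * a) - X q * (ψ2 * (Y (Y ψ1)) + (-1 : K) * ψ1 * (Y (Y ψ2))) - q * ((X ψ2) * (Y (Y ψ1)) + (-1 : K) * (X ψ1) * (Y (Y ψ2)) + (-1 : K) * ψ2 * (Y (Y ψ1)) * b + (-1 : K) * ψ2 * (Y ψ1) * (Y b) + (-1 : K) * ψ2 * (Y ψ1) * c + ψ2 * (Y ψ1) * a * b + (-1 : K) * ψ2 * (X ψ1) * (Y a) + ψ2 * (X ψ1) * a ^ 2 + ψ1 * (Y (Y ψ2)) * b + ψ1 * (Y ψ2) * (Y b) + ψ1 * (Y ψ2) * c + (-1 : K) * ψ1 * (Y ψ2) * a * b + ψ1 * (X ψ2) * (Y a) + (-1 : K) * ψ1 * (X ψ2) * a ^ 2) := by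
    have h : X (Y q * d) = X (((X ψ2) * (Y ψ1) + (-1 : K) * (X ψ1) * (Y ψ2) + ψ2 * (Y ψ1) * b + ψ2 * (X ψ1) * a + (-1 : K) * ψ1 * (Y ψ2) * b + (-1 : K) * ψ1 * (X ψ2) * a) - q * (ψ2 * (Y (Y ψ1)) + (-1 : K) * ψ1 * (Y (Y ψ2)))) := by rw [R4]
    simp only [map_add, map_neg, map_sub, Derivation.leibniz, smul_eq_mul,
      Derivation.map_one_eq_zero, neg_zero, mul_zero, zero_mul, add_zero, zero_add] at h
    rw [e1, e2, hXyy1, hXyy2, hXd] at h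
    linear_combination h
  have R8 : X (Y r) * d = ((-1 : K) * (X (X ψ2)) * (Y (Y ψ1)) + (X (X ψ1)) * (Y (Y ψ2)) + (-1 : K) * (Y ψ2) * (X (X ψ1)) * a + (Y ψ1) * (X (X ψ2)) * a + (X ψ2) * (Y (Y ψ1)) * b + (X ψ2) * (Y ψ1) * (Y b) + (X ψ2) * (Y ψ1) * (X a) + (2 : K) * (X ψ2) * (Y ψ1) * c + (-2 : K) * (X ψ2) * (Y ψ1) * a * b + (-1 : K) * (X ψ1) * (Y (Y ψ2)) * b + (-1 : K) * (X ψ1) * (Y ψ2) * (Y b) + (-1 : K) * (X ψ1) * (Y ψ2) * (X a) + (-2 : K) * (X ψ1) * (Y ψ2) * c + (2 : K) * (X ψ1) * (Y ψ2) * a * b + ψ2 * (Y ψ1) * (X c) + (-1 : K) * ψ2 * (Y ψ1) * b * c + (-1 : K) * ψ2 * (X ψ1) * (Y c) + ψ2 * (X ψ1) * a * c + (-1 : K) * ψ1 * (Y ψ2) * (X c) + ψ1 * (Y ψ2) * b * c + ψ1 * (X ψ2) * (Y c) + (-1 : K) * ψ1 * (X ψ2) * a * c) - Y r * ((X ψ2)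 * (Y ψ1) + (-1 : K) * (X ψ1) * (Y ψ2) + (-1 : K) * ψ2 * (Y ψ1) * b + (-1 : K) * ψ2 * (X ψ1) * a + ψ1 * (Y ψ2) * b + ψ1 * (X ψ2) * a) - X r * (ψ2 * (Y (Y ψ1)) + (-1 : K) * ψ1 * (Y (Y ψ2))) - r * ((X ψ2) * (Y (Y ψ1)) + (-1 : K) * (X ψ1) * (Y (Y ψ2)) + (-1 : K) * ψ2 * (Y (Y ψ1)) * b + (-1 : K) * ψ2 * (Y ψ1) * (Y b) + (-1 : K) * ψ2 * (Y ψ1) * c + ψ2 * (Y ψ1) * a * b + (-1 : K) * ψ2 * (X ψ1) * (Y a) + ψ2 * (X ψ1) * a ^ 2 + ψ1 * (Y (Y ψ2)) * b + ψ1 * (Y ψ2) * (Y b) + ψ1 * (Y ψ2) * c + (-1 : K) * ψ1 * (Y ψ2) * a * b + ψ1 * (X ψ2) * (Y a) + (-1 : K) * ψ1 * (X ψ2) * a ^ 2) := by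
    have h : X (Y r * d) = X (((-1 : K) * (X ψ2) * (Y (Y ψ1)) + (X ψ2) * (Y ψ1) * a + (X ψ1) * (Y (Y ψ2)) + (-1 : K) * (X ψ1) * (Y ψ2) * a + ψ2 * (Y ψ1) * c + (-1 : K) * ψ1 * (Y ψ2) * c) - r * (ψ2 * (Y (Y ψ1)) + (-1 : K) * ψ1 * (Y (Y ψ2)))) := by rw [R6]
    simp only [map_add, map_neg, map_sub, Derivation.leibniz, smul_eq_mul,
      Derivation.map_one_eq_zero, neg_zero, mul_zero, zero_mul, add_zero, zero_add] at h
    rw [e1, e2, hXyy1, hXyy2, hXd] at h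
    linear_combination h
  constructor
  · have key : (-q * X r + q ^ 2 * Y r + X q * r - b * X q + X b * q
        + q ^ 2 * (Y b - a * Y q - X a) - q ^ 3 * Y a + Y q * X q
        - X (Y q) * q) * d ^ 4 = 0 := by
      linear_combination ((1 : K) * ψ2 * (X (X ψ1)) * b * d ^ 2 + (-1 : K) * ψ2 * (X ψ1) * (X b) * d ^ 2 + (1 : K) * ψ2 ^ 2 * (X ψ1) ^ 2 * (Y b) * d + (-1 : K) * ψ2 ^ 3 * (X ψ1) ^ 2 * (Y (Y ψ1)) * b + (-1 : K) * ψ1 * (X (X ψ2)) * b * d ^ 2 + (1 : K) * ψ1 * (X ψ2) * (X b) * d ^ 2 + (-2 : K) * ψ1 * ψ2 * (X ψ1) * (X ψ2) * (Y b) * d + (2 : K) * ψ1 * ψ2 ^ 2 * (X ψ1) * (X ψ2) * (Y (Y ψ1)) * b + (1 : K) * ψ1 * ψ2 ^ 2 * (X ψ1) ^ 2 * (Y (Y ψ2)) * b + (1 : K) * ψ1 ^ 2 * (X ψ2) ^ 2 * (Y b) * d + (-1 : K) * ψ1 ^ 2 * ψ2 * (X ψ2) ^ 2 * (Y (Y ψ1))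 * b + (-2 : K) * ψ1 ^ 2 * ψ2 * (X ψ1) * (X ψ2) * (Y (Y ψ2)) * b + (1 : K) * ψ1 ^ 3 * (X ψ2) ^ 2 * (Y (Y ψ2)) * b) * hd + ((-1 : K) * d ^ 3 * q) * R7 + ((1 : K) * d ^ 3 * (Y q) + (1 : K) * d ^ 3 * r + (-1 : K) * b * d ^ 3 + (1 : K) * ψ2 * (Y (Y ψ1)) * d ^ 2 * q + (-1 : K) * ψ1 * (Y (Y ψ2)) * d ^ 2 * q) * R3 + ((-1 : K) * a * d ^ 3 * q ^ 2 + (-1 : K) * ψ2 * (X (X ψ1)) * d ^ 2 + (1 : K) * ψ1 * (X (X ψ2)) * d ^ 2) * R4 + ((-1 : K) * d ^ 3 * q) * R5 + ((1 : K) * d ^ 3 * q ^ 2) * R6 + ((1 : K) * (Y b) * d ^ 3 * q + (1 : K) * (X b) * d ^ 3 + (-1 : K) * (Y a) * d ^ 3 * q ^ 2 + (-1 : K) * (X a) * d ^ 3 * q + (-1 : K) * ψ2 * (Y (Y ψ1)) * d ^ 2 * q * r + (-1 : K) * ψ2 * (Y (Y ψ1)) * b * d ^ 2 * q + (1 : K)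 * ψ2 * (Y (Y ψ1)) * a * d ^ 2 * q ^ 2 + (-1 : K) * ψ2 * (X (X ψ1)) * a * d ^ 2 + (-1 : K) * ψ2 * (Y ψ1) * (Y b) * d ^ 2 * q + (-1 : K) * ψ2 * (Y ψ1) * (X b) * d ^ 2 + (-1 : K) * ψ2 * (X ψ2) * (Y ψ1) * (Y (Y ψ1)) * d * q + (-1 : K) * ψ2 * (X ψ1) * (Y b) * d ^ 2 + (1 : K) * ψ2 * (X ψ1) * (Y ψ2) * (Y (Y ψ1)) * d * q + (1 : K) * ψ2 ^ 2 * (Y ψ1) * (Y (Y ψ1)) * b * d * q + (1 : K) * ψ2 ^ 2 * (X ψ1) * (Y (Y ψ1)) * d * r + (1 : K) * ψ2 ^ 2 * (X ψ1) * (Y (Y ψ1)) * b * d + (1 : K) * ψ2 ^ 2 * (X ψ1) * (Y ψ1) * (Y b) * d + (1 : K) * ψ2 ^ 2 * (X ψ1) * (X ψ2) * (Y ψ1) * (Y (Y ψ1)) + (-1 : K) * ψ2 ^ 2 * (X ψ1) ^ 2 * (Y ψ2) * (Y (Y ψ1)) + (-1 : K) * ψ2 ^ 3 * (X ψ1) *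 (Y ψ1) * (Y (Y ψ1)) * b + (1 : K) * ψ1 * (Y (Y ψ2)) * d ^ 2 * q * r + (1 : K) * ψ1 * (Y (Y ψ2)) * b * d ^ 2 * q + (-1 : K) * ψ1 * (Y (Y ψ2)) * a * d ^ 2 * q ^ 2 + (1 : K) * ψ1 * (X (X ψ2)) * a * d ^ 2 + (1 : K) * ψ1 * (Y ψ2) * (Y b) * d ^ 2 * q + (1 : K) * ψ1 * (Y ψ2) * (X b) * d ^ 2 + (1 : K) * ψ1 * (X ψ2) * (Y b) * d ^ 2 + (1 : K) * ψ1 * (X ψ2) * (Y ψ1) * (Y (Y ψ2)) * d * q + (-1 : K) * ψ1 * (X ψ1) * (Y ψ2) * (Y (Y ψ2)) * d * q + (-1 : K) * ψ1 * ψ2 * (Y ψ2) * (Y (Y ψ1)) * b * d * q + (-1 : K) * ψ1 * ψ2 * (Y ψ1) * (Y (Y ψ2)) * b * d * q + (-1 : K) * ψ1 * ψ2 * (X ψ2) * (Y (Y ψ1)) * d * r + (-1 : K) * ψ1 * ψ2 * (X ψ2) * (Y (Y ψ1)) * b * d + (-1 : K) * ψ1 * ψ2 * (X ψ2) * (Y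 ψ1) * (Y b) * d + (-1 : K) * ψ1 * ψ2 * (X ψ2) ^ 2 * (Y ψ1) * (Y (Y ψ1)) + (-1 : K) * ψ1 * ψ2 * (X ψ1) * (Y (Y ψ2)) * d * r + (-1 : K) * ψ1 * ψ2 * (X ψ1) * (Y (Y ψ2)) * b * d + (-1 : K) * ψ1 * ψ2 * (X ψ1) * (Y ψ2) * (Y b) * d + (1 : K) * ψ1 * ψ2 * (X ψ1) * (X ψ2) * (Y ψ2) * (Y (Y ψ1)) + (-1 : K) * ψ1 * ψ2 * (X ψ1) * (X ψ2) * (Y ψ1) * (Y (Y ψ2)) + (1 : K) * ψ1 * ψ2 * (X ψ1) ^ 2 * (Y ψ2) * (Y (Y ψ2)) + (1 : K) * ψ1 * ψ2 ^ 2 * (X ψ2) * (Y ψ1) * (Y (Y ψ1)) * b + (1 : K) * ψ1 * ψ2 ^ 2 * (X ψ1) * (Y ψ2) * (Y (Y ψ1)) * b + (1 : K) * ψ1 * ψ2 ^ 2 * (X ψ1) * (Y ψ1) * (Y (Y ψ2)) * b + (1 : K) * ψ1 ^ 2 * (Y ψ2) * (Y (Y ψ2)) * b * d * q + (1 : K)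 * ψ1 ^ 2 * (X ψ2) * (Y (Y ψ2)) * d * r + (1 : K) * ψ1 ^ 2 * (X ψ2) * (Y (Y ψ2)) * b * d + (1 : K) * ψ1 ^ 2 * (X ψ2) * (Y ψ2) * (Y b) * d + (1 : K) * ψ1 ^ 2 * (X ψ2) ^ 2 * (Y ψ1) * (Y (Y ψ2)) + (-1 : K) * ψ1 ^ 2 * (X ψ1) * (X ψ2) * (Y ψ2) * (Y (Y ψ2)) + (-1 : K) * ψ1 ^ 2 * ψ2 * (X ψ2) * (Y ψ2) * (Y (Y ψ1)) * b + (-1 : K) * ψ1 ^ 2 * ψ2 * (X ψ2) * (Y ψ1) * (Y (Y ψ2)) * b + (-1 : K) * ψ1 ^ 2 * ψ2 * (X ψ1) * (Y ψ2) * (Y (Y ψ2)) * b + (1 : K) * ψ1 ^ 3 * (X ψ2) * (Y ψ2) * (Y (Y ψ2)) * b) * G1 + ((-1 : K) * ψ2 * (X (X ψ1)) * d ^ 2 + (-1 : K) * ψ2 ^ 3 * (X ψ1) ^ 2 * (Y (Y ψ1)) + (1 : K) * ψ1 * (X (X ψ2)) * d ^ 2 + (2 : K) * ψ1 * ψ2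 ^ 2 * (X ψ1) * (X ψ2) * (Y (Y ψ1)) + (1 : K) * ψ1 * ψ2 ^ 2 * (X ψ1) ^ 2 * (Y (Y ψ2)) + (-1 : K) * ψ1 ^ 2 * ψ2 * (X ψ2) ^ 2 * (Y (Y ψ1)) + (-2 : K) * ψ1 ^ 2 * ψ2 * (X ψ1) * (X ψ2) * (Y (Y ψ2)) + (1 : K) * ψ1 ^ 3 * (X ψ2) ^ 2 * (Y (Y ψ2))) * G2
    exact (mul_eq_zero.mp key).resolve_right (pow_ne_zero 4 hdne)
  · have key : (-c * X q + (c - a * r) * Y q * q + (a * r + Y r) * X q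
        + (Y c - r * Y a) * q ^ 2
        + (r * Y r - a * X r - Y r * b - X (Y r) - r * X a + X c) * q) * d ^ 4 = 0 := by
      linear_combination ((1 : K) * ψ2 * (X (X ψ1)) * c * d ^ 2 + (1 : K) * ψ2 * (X ψ2) * (X (X ψ1)) * (Y (Y ψ1)) * d + (-1 : K) * ψ2 * (X ψ1) * (X c) * d ^ 2 + (-1 : K) * ψ2 * (X ψ1) * (X (X ψ2)) * (Y (Y ψ1)) * d + (1 : K) * ψ2 * (X ψ1) * (X ψ2) * (Y ψ1) * (Y b) * d + (-1 : K) * ψ2 * (X ψ1) ^ 2 * (Y ψ2) * (Y b) * d + (-1 : K) * ψ2 ^ 2 * (X ψ1) * (X ψ2) * (Y ψ1) * (Y (Y ψ1)) * b + (1 : K) * ψ2 ^ 2 * (X ψ1) ^ 2 * (Y ψ2) * (Y (Y ψ1)) * b + (-1 : K) * ψ1 * (X (X ψ2)) * c * d ^ 2 + (1 : K) * ψ1 * (X ψ2) * (X c) * d ^ 2 + (-1 : K) * ψ1 * (X ψ2) * (X (X ψ1)) * (Y (Y ψ2)) * d + (-1 : K) * ψ1 * (X ψ2) ^ 2 * (Y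 ψ1) * (Y b) * d + (1 : K) * ψ1 * (X ψ1) * (X (X ψ2)) * (Y (Y ψ2)) * d + (1 : K) * ψ1 * (X ψ1) * (X ψ2) * (Y ψ2) * (Y b) * d + (1 : K) * ψ1 * ψ2 * (X ψ2) ^ 2 * (Y ψ1) * (Y (Y ψ1)) * b + (-1 : K) * ψ1 * ψ2 * (X ψ1) * (X ψ2) * (Y ψ2) * (Y (Y ψ1)) * b + (1 : K) * ψ1 * ψ2 * (X ψ1) * (X ψ2) * (Y ψ1) * (Y (Y ψ2)) * b + (-1 : K) * ψ1 * ψ2 * (X ψ1) ^ 2 * (Y ψ2) * (Y (Y ψ2)) * b + (-1 : K) * ψ1 ^ 2 * (X ψ2) ^ 2 * (Y ψ1) * (Y (Y ψ2)) * b + (1 : K) * ψ1 ^ 2 * (X ψ1) * (X ψ2) * (Y ψ2) * (Y (Y ψ2)) * b) * hd + ((-1 : K) * d ^ 3 * q) * R8 + ((1 : K) * d ^ 3 * (Y r) + (-1 : K) * c * d ^ 3 + (1 : K) * a * d ^ 3 * r) * R3 + ((1 : K) * c * d ^ 3 * q + (-1 : K) * a * d ^ 3 * q * r) * R4 + ((-1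 : K) * a * d ^ 3 * q + (1 : K) * ψ2 * (Y (Y ψ1)) * d ^ 2 * q + (-1 : K) * ψ1 * (Y (Y ψ2)) * d ^ 2 * q) * R5 + ((1 : K) * d ^ 3 * q * r + (-1 : K) * b * d ^ 3 * q + (-1 : K) * ψ2 * (X (X ψ1)) * d ^ 2 + (1 : K) * ψ1 * (X (X ψ2)) * d ^ 2) * R6 + ((1 : K) * (Y c) * d ^ 3 * q + (1 : K) * (X c) * d ^ 3 + (-1 : K) * (Y a) * d ^ 3 * q * r + (-1 : K) * (X a) * d ^ 3 * r + (1 : K) * (X (X ψ2)) * (Y (Y ψ1)) * d ^ 2 + (-1 : K) * (X (X ψ1)) * (Y (Y ψ2)) * d ^ 2 + (-1 : K) * (X ψ2) * (Y ψ1) * (Y b) * d ^ 2 + (-1 : K) * (X ψ2) * (Y ψ1) * (X a) * d ^ 2 + (1 : K) * (X ψ1) * (Y ψ2) * (Y b) * d ^ 2 + (1 : K) * (X ψ1) * (Y ψ2) * (X a) * d ^ 2 + (-1 : K) * ψ2 * (Y (Y ψ1)) * d ^ 2 * r ^ 2 + (-1 : K) * ψ2 * (Y (Y ψ1)) * c *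 d ^ 2 * q + (1 : K) * ψ2 * (Y (Y ψ1)) * a * d ^ 2 * q * r + (1 : K) * ψ2 * (Y ψ2) * (X (X ψ1)) * (Y (Y ψ1)) * d + (-1 : K) * ψ2 * (Y ψ1) * (X c) * d ^ 2 + (-1 : K) * ψ2 * (Y ψ1) * (Y b) * d ^ 2 * r + (-1 : K) * ψ2 * (Y ψ1) * (X (X ψ2)) * (Y (Y ψ1)) * d + (-1 : K) * ψ2 * (X ψ2) * (Y ψ1) * (Y (Y ψ1)) * d * r + (1 : K) * ψ2 * (X ψ2) * (Y ψ1) * (Y (Y ψ1)) * b * d + (1 : K) * ψ2 * (X ψ1) * (Y ψ2) * (Y (Y ψ1)) * d * r + (-1 : K) * ψ2 * (X ψ1) * (Y ψ2) * (Y (Y ψ1)) * b * d + (1 : K) * ψ2 ^ 2 * (Y ψ1) * (Y (Y ψ1)) * b * d * r + (1 : K) * ψ1 * (Y (Y ψ2)) * d ^ 2 * r ^ 2 + (1 : K) * ψ1 * (Y (Y ψ2)) * c * d ^ 2 * q + (-1 : K) * ψ1 * (Y (Y ψ2)) * a * d ^ 2 * q * r + (1 : K) * ψ1 * (Y ψ2)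 * (X c) * d ^ 2 + (1 : K) * ψ1 * (Y ψ2) * (Y b) * d ^ 2 * r + (-1 : K) * ψ1 * (Y ψ2) * (X (X ψ1)) * (Y (Y ψ2)) * d + (1 : K) * ψ1 * (Y ψ1) * (X (X ψ2)) * (Y (Y ψ2)) * d + (1 : K) * ψ1 * (X ψ2) * (Y ψ1) * (Y (Y ψ2)) * d * r + (-1 : K) * ψ1 * (X ψ2) * (Y ψ1) * (Y (Y ψ2)) * b * d + (-1 : K) * ψ1 * (X ψ1) * (Y ψ2) * (Y (Y ψ2)) * d * r + (1 : K) * ψ1 * (X ψ1) * (Y ψ2) * (Y (Y ψ2)) * b * d + (-1 : K) * ψ1 * ψ2 * (Y ψ2) * (Y (Y ψ1)) * b * d * r + (-1 : K) * ψ1 * ψ2 * (Y ψ1) * (Y (Y ψ2)) * b * d * r + (1 : K) * ψ1 ^ 2 * (Y ψ2) * (Y (Y ψ2)) * b * d * r) * G1 + ((-1 : K) * ψ2 * (X (X ψ1)) * a * d ^ 2 + (1 : K) * ψ2 * (X ψ1) * (X a) * d ^ 2 + (1 : K) * ψ2 ^ 2 * (X (X ψ1)) * (Y (Y ψ1)) *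 d + (1 : K) * ψ2 ^ 2 * (X ψ1) * (Y (Y ψ1)) * d * r + (1 : K) * ψ2 ^ 2 * (X ψ1) * (Y ψ1) * (Y b) * d + (-1 : K) * ψ2 ^ 3 * (X ψ1) * (Y ψ1) * (Y (Y ψ1)) * b + (1 : K) * ψ1 * (X (X ψ2)) * a * d ^ 2 + (-1 : K) * ψ1 * (X ψ2) * (X a) * d ^ 2 + (-1 : K) * ψ1 * ψ2 * (X (X ψ2)) * (Y (Y ψ1)) * d + (-1 : K) * ψ1 * ψ2 * (X (X ψ1)) * (Y (Y ψ2)) * d + (-1 : K) * ψ1 * ψ2 * (X ψ2) * (Y (Y ψ1)) * d * r + (-1 : K) * ψ1 * ψ2 * (X ψ2) * (Y ψ1) * (Y b) * d + (-1 : K) * ψ1 * ψ2 * (X ψ1) * (Y (Y ψ2)) * d * r + (-1 : K) * ψ1 * ψ2 * (X ψ1) * (Y ψ2) * (Y b) * d + (1 : K) * ψ1 * ψ2 ^ 2 * (X ψ2) * (Y ψ1) * (Y (Y ψ1)) * b + (1 : K) * ψ1 * ψ2 ^ 2 * (X ψ1) * (Y ψ2) * (Y (Y ψ1)) * b + (1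 : K) * ψ1 * ψ2 ^ 2 * (X ψ1) * (Y ψ1) * (Y (Y ψ2)) * b + (1 : K) * ψ1 ^ 2 * (X (X ψ2)) * (Y (Y ψ2)) * d + (1 : K) * ψ1 ^ 2 * (X ψ2) * (Y (Y ψ2)) * d * r + (1 : K) * ψ1 ^ 2 * (X ψ2) * (Y ψ2) * (Y b) * d + (-1 : K) * ψ1 ^ 2 * ψ2 * (X ψ2) * (Y ψ2) * (Y (Y ψ1)) * b + (-1 : K) * ψ1 ^ 2 * ψ2 * (X ψ2) * (Y ψ1) * (Y (Y ψ2)) * b + (-1 : K) * ψ1 ^ 2 * ψ2 * (X ψ1) * (Y ψ2) * (Y (Y ψ2)) * b + (1 : K) * ψ1 ^ 3 * (X ψ2) * (Y ψ2) * (Y (Y ψ2)) * b) * G2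
    exact (mul_eq_zero.mp key).resolve_right (pow_ne_zero 4 hdne)
end

section
/- Let a, b, c, q, r, α ∈ K and define the gauge-transformed coefficients a1 = a + α_y, b1 = b + α_x, c1 = c + a·α_x + b·α_y + α_xy + α_x·α_y, q1 = q, r1 = r + α_x + q·α_y. Then the gauge invariants of the pair are unchanged: q1 = q, a1_x − b1_y = a_x − b_y, a1·b1 − c1 + a1_x = a·b − c + a_x, and r1 − b1 − q1·a1 = r − b − q·a. (The functions q, m = a_x − b_y, h = ab − c + a_x, and R = r − b − qa are differential invariants of the pair (L, M) under gauge transformations by exp(α).) -/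
/-- The functions `q`, `m = a_x − b_y`, `h = ab − c + a_x`, `R = r − b − qa`
are differential invariants of the pair `(L, M)` under gauge transformations
by `exp(α)`. -/
theorem gauge_invariants {K : Type*} [Field K] [CharZero K]
    (X Y : Derivation ℚ K K) (hcomm : ∀ f : K, X (Y f) = Y (X f))
    (a b c q r α : K) (a1 b1 c1 q1 r1 : K)
    (ha1 : a1 = a + Y α)
    (hb1 : b1 = b + X α)
    (hc1 : c1 = c + a * X α + b * Y α + X (Y α) + X α * Y α)
    (hq1 : q1 = q)
    (hr1 : r1 = r + X α + q * Y α) :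
    q1 = q ∧
    X a1 - Y b1 = X a - Y b ∧
    a1 * b1 - c1 + X a1 = a * b - c + X a ∧
    r1 - b1 - q1 * a1 = r - b - q * a := by
  subst ha1 hb1 hc1 hq1 hr1
  refine ⟨rfl, ?_, ?_, ?_⟩
  · simp [map_add, hcomm]
  · simp [map_add]; ring
  · ring
end

section
/- Let a, b, c, q, r, α, β ∈ K with q ≠ 0, and define the gauged-evolution-transformed coefficients a1 = a + α_y + β, b1 = b + α_x + β·q, c1 = c + a·α_x + b·α_y + α_xy + α_y·α_x + β·r + β·α_x + β·q·α_y, q1 = q, r1 = r + α_x + q·α_y. For coefficients (a, b, c, q, r) set m = a_x − b_y, h = ab − c + a_x, R = r − b − qa, and define I1 = q, I2 = 2m − R_y + (R/q)_x, I3 = 2h + (R/q)_x − R²/(2q); define I1', I2', I3' by the same formulas from (a1, b1, c1, q1, r1). Then I1' = I1, I2' = I2, and I3' = I3. (The functions I1, I2, I3 are differential invariants of the pair (L, M) under gauged evolutions.) -/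
/-- The functions `I1 = q`, `I2 = 2m − R_y + (R/q)_x`,
`I3 = 2h + (R/q)_x − R²/(2q)` are differential invariants of the pair
`(L, M)` under gauged evolutions. -/
theorem gauged_evolution_invariants {K : Type*} [Field K] [CharZero K]
    (X Y : Derivation ℚ K K) (hcomm : ∀ f : K, X (Y f) = Y (X f))
    (a b c q r α β : K) (hq : q ≠ 0)
    (a1 b1 c1 q1 r1 : K)
    (ha1 : a1 = a + Y α + β)
    (hb1 : b1 = b + X α + β * q)
    (hc1 : c1 = c + a * X α + b * Y α + X (Y α) + Y α * X α + β * r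
        + β * X α + β * q * Y α)
    (hq1 : q1 = q)
    (hr1 : r1 = r + X α + q * Y α)
    (m h R : K)
    (hm : m = X a - Y b) (hh : h = a * b - c + X a) (hR : R = r - b - q * a)
    (m1 h1 R1 : K)
    (hm1 : m1 = X a1 - Y b1) (hh1 : h1 = a1 * b1 - c1 + X a1)
    (hR1 : R1 = r1 - b1 - q1 * a1)
    (I1 I2 I3 I1' I2' I3' : K)
    (hI1 : I1 = q)
    (hI2 : I2 = 2 * m - Y R + X (R / q))
    (hI3 : I3 = 2 * h + X (R / q) - R ^ 2 / (2 * q))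
    (hI1' : I1' = q1)
    (hI2' : I2' = 2 * m1 - Y R1 + X (R1 / q1))
    (hI3' : I3' = 2 * h1 + X (R1 / q1) - R1 ^ 2 / (2 * q1)) :
    I1' = I1 ∧ I2' = I2 ∧ I3' = I3 := by
  have hRnew : R1 = R - (β * q + β * q) := by
    rw [hR1, hr1, hb1, ha1, hq1, hR]; ring
  have hdiv : R1 / q1 = R / q - (β + β) := by
    rw [hRnew, hq1]; field_simp
  have hm1' : m1 = m + X β - q * Y β - β * Y q := by
    rw [hm1, ha1, hb1, hm]
    simp only [map_add, Derivation.leibniz, smul_eq_mul, hcomm]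
    ring
  have hh1' : h1 = h + X β - β * R + β ^ 2 * q := by
    rw [hh1, ha1, hb1, hc1, hh, hR, map_add, map_add]
    ring
  refine ⟨by rw [hI1', hI1, hq1], ?_, ?_⟩
  · rw [hI2', hI2, hdiv, hRnew, hm1']
    simp only [map_add, map_sub, Derivation.leibniz, smul_eq_mul]
    ring
  · rw [hI3', hI3, hh1', hdiv, hRnew, hq1, map_sub, map_add]
    field_simp
    ring
end

section
/- Let a, b, c, q, r ∈ K, and set m = a_x − b_y, h = ab − c + a_x, R = r − b − qa. Then system (S), namely (S1) −q·r_x + q²·r_y + q_x·r − b·q_x + b_x·q + q²·(b_y − a·q_y − a_x) − q³·a_y + q_y·q_x − q_xy·q = 0 together with (S2) −c·q_x + (c − a·r)·q_y·q + (a·r + r_y)·q_x + (c_y − r·a_y)·q² + (r·r_y − a·r_x − r_y·b − r_xy − r·a_x + c_x)·q = 0, holds if and only if the invariantized system (S') holds: (S1') −2q²·m + q²·R_y + q_x·R + q_y·q_x − q·R_x − q_xy·q = 0, and (S2') q_x·h − q·h_x − q²·h_y − q_x·m + q_x·R_y + q·m_x − q·R_xy − q_y·q·h − q·R·m + q·R·R_y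 = 0. -/
/-- System (S) holds if and only if the invariantized system (S') holds,
where `m = a_x − b_y`, `h = ab − c + a_x`, `R = r − b − qa`. -/
theorem system_iff_invariantized {K : Type*} [Field K] [CharZero K]
    (X Y : Derivation ℚ K K) (hcomm : ∀ f : K, X (Y f) = Y (X f))
    (a b c q r : K) (m h R : K)
    (hm : m = X a - Y b) (hh : h = a * b - c + X a)
    (hR : R = r - b - q * a) :
    ((-q * X r + q ^ 2 * Y r + X q * r - b * X q + X b * q
        + q ^ 2 * (Y b - a * Y q - X a) - q ^ 3 * Y a + Y q * X q
        - X (Y q) * q = 0) ∧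
     (-c * X q + (c - a * r) * Y q * q + (a * r + Y r) * X q
        + (Y c - r * Y a) * q ^ 2
        + (r * Y r - a * X r - Y r * b - X (Y r) - r * X a + X c) * q = 0))
    ↔
    ((-2 * q ^ 2 * m + q ^ 2 * Y R + X q * R + Y q * X q - q * X R
        - X (Y q) * q = 0) ∧
     (X q * h - q * X h - q ^ 2 * Y h - X q * m + X q * Y R + q * X m
        - q * X (Y R) - Y q * q * h - q * R * m + q * R * Y R = 0)) := by
  subst hm hh hR
  have e1 : (-2 * q ^ 2 * (X a - Y b) + q ^ 2 * Y (r - b - q * a)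
      + X q * (r - b - q * a) + Y q * X q - q * X (r - b - q * a)
      - X (Y q) * q)
      = (-q * X r + q ^ 2 * Y r + X q * r - b * X q + X b * q
        + q ^ 2 * (Y b - a * Y q - X a) - q ^ 3 * Y a + Y q * X q
        - X (Y q) * q) := by
    simp only [map_sub, map_add, Derivation.leibniz, smul_eq_mul, hcomm]
    ring
  have e2 : (X q * (a * b - c + X a) - q * X (a * b - c + X a)
      - q ^ 2 * Y (a * b - c + X a) - X q * (X a - Y b)
      + X q * Y (r - b - q * a) + q * X (X a - Y b)
      - q * X (Y (r - b - q * a)) - Y q * q * (a * b - c + X a)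
      - q * (r - b - q * a) * (X a - Y b)
      + q * (r - b - q * a) * Y (r - b - q * a))
      = (-c * X q + (c - a * r) * Y q * q + (a * r + Y r) * X q
        + (Y c - r * Y a) * q ^ 2
        + (r * Y r - a * X r - Y r * b - X (Y r) - r * X a + X c) * q)
      - a * (-q * X r + q ^ 2 * Y r + X q * r - b * X q + X b * q
        + q ^ 2 * (Y b - a * Y q - X a) - q ^ 3 * Y a + Y q * X q
        - X (Y q) * q) := by
    simp only [map_sub, map_add, Derivation.leibniz, smul_eq_mul, hcomm]
    ring
  constructor
  · rintro ⟨h1, h2⟩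
    refine ⟨by rw [e1]; exact h1, ?_⟩
    rw [e2, h1, h2]; ring
  · rintro ⟨f1, f2⟩
    constructor
    · linear_combination f1 - e1
    · linear_combination f2 - e2 + a * f1 - a * e1
end

section
/- Let q, R, h, m ∈ K with q ≠ 0, and set I2 = 2m − R_y + (R/q)_x, I3 = 2h + (R/q)_x − R²/(2q). Then system (S'), namely (S1') −2q²·m + q²·R_y + q_x·R + q_y·q_x − q·R_x − q_xy·q = 0 together with (S2') q_x·h − q·h_x − q²·h_y − q_x·m + q_x·R_y + q·m_x − q·R_xy − q_y·q·h − q·R·m + q·R·R_y = 0, holds if and only if the following two invariant conditions hold simultaneously: (E2) I2 + ∂y(q_x/q) = 0, and (E3) ∂x(I3) + q·∂y(I3) + (q_y − q_x/q)·I3 = (q_x/q)·∂y(q_x/q) − ∂x(∂y(q_x/q)). (Necessary and sufficient conditions for the existence of a Darboux transformation of bi-degree (1,1) in terms of the gauged evolution invariants; here (q_x/q) = Q_x and ∂y(q_x/q) = Q_xy for Q = ln q.) -/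
/-- The invariantized system (S') holds if and only if the two invariant
conditions (E2) `I2 + Q_xy = 0` and (E3)
`I3_x + q I3_y + (q_y − q_x/q) I3 = Q_x Q_xy − Q_xxy` hold, where `Q = ln q`
(so `Q_x = q_x/q`). -/
theorem invariantized_system_iff_invariant_conditions
    {K : Type*} [Field K] [CharZero K]
    (X Y : Derivation ℚ K K) (hcomm : ∀ f : K, X (Y f) = Y (X f))
    (q R h m : K) (hq : q ≠ 0)
    (I2 I3 : K)
    (hI2 : I2 = 2 * m - Y R + X (R / q))
    (hI3 : I3 = 2 * h + X (R / q) - R ^ 2 / (2 * q)) :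
    ((-2 * q ^ 2 * m + q ^ 2 * Y R + X q * R + Y q * X q - q * X R
        - X (Y q) * q = 0) ∧
     (X q * h - q * X h - q ^ 2 * Y h - X q * m + X q * Y R + q * X m
        - q * X (Y R) - Y q * q * h - q * R * m + q * R * Y R = 0))
    ↔
    ((I2 + Y (X q / q) = 0) ∧
     (X I3 + q * Y I3 + (Y q - X q / q) * I3
        = (X q / q) * Y (X q / q) - X (Y (X q / q)))) := by
  have tw : ∀ (D : Derivation ℚ K K) (a : K), D (2 * a) = 2 * D a := by
    intro D a; rw [two_mul, map_add, two_mul]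
  have dq : ∀ (D : Derivation ℚ K K) (a b : K), D (a / b) = (D a * b - a * D b) / b ^ 2 := by
    intro D a b
    rw [Derivation.leibniz_div]
    simp only [smul_eq_mul, smul_sub]
    ring
  have sq : ∀ (D : Derivation ℚ K K) (a : K), D (a ^ 2) = 2 * a * D a := by
    intro D a; rw [pow_two, Derivation.leibniz]; simp only [smul_eq_mul]; ring
  have h1 : X (R / q) = (X R * q - R * X q) / q ^ 2 := dq X R q
  have h2 : Y (X q / q) = (X (Y q) * q - X q * Y q) / q ^ 2 := by
    rw [dq Y (X q) q, hcomm q]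
  have h3 : X (X (R / q)) = ((X (X R) * q - R * X (X q)) * q ^ 2
      - (X R * q - R * X q) * (2 * q * X q)) / q ^ 4 := by
    rw [h1, dq]
    rw [map_sub, Derivation.leibniz, Derivation.leibniz, sq]
    simp only [smul_eq_mul]
    ring
  have h4 : Y (X (R / q)) = ((X (Y R) * q + X R * Y q - Y R * X q - R * X (Y q)) * q ^ 2
      - (X R * q - R * X q) * (2 * q * Y q)) / q ^ 4 := by
    rw [h1, dq]
    rw [map_sub, Derivation.leibniz, Derivation.leibniz, sq, ← hcomm R, ← hcomm q]
    simp only [smul_eq_mul]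
    ring
  have h5 : X (Y (X q / q)) = ((X (X (Y q)) * q + X (Y q) * X q - X (X q) * Y q
      - X q * X (Y q)) * q ^ 2
      - (X (Y q) * q - X q * Y q) * (2 * q * X q)) / q ^ 4 := by
    rw [h2, dq]
    rw [map_sub, Derivation.leibniz, Derivation.leibniz, sq]
    simp only [smul_eq_mul]
    ring
  have h6 : X (R ^ 2 / (2 * q)) = ((2 * R * X R) * (2 * q) - R ^ 2 * (2 * X q)) / (2 * q) ^ 2 := by
    rw [dq, sq, tw]
  have h7 : Y (R ^ 2 / (2 * q)) = ((2 * R * Y R) * (2 * q) - R ^ 2 * (2 * Y q)) / (2 * q) ^ 2 := by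
    rw [dq, sq, tw]
  subst hI2 hI3
  simp only [map_add, map_sub, tw]
  set w : K := R ^ 2 / (2 * q) with hw
  set P : K := X q / q with hP
  set u1 : K := X (R / q) with hu1
  set u2 : K := Y P with hu2
  set u3 : K := X u1 with hu3
  set u4 : K := Y u1 with hu4
  set u5 : K := X u2 with hu5
  set u6 : K := X w with hu6
  set u7 : K := Y w with hu7
  have r0 : 2 * q * w = R ^ 2 := by rw [hw]; field_simp
  have rP : q * P = X q := by rw [hP]; field_simp
  have r1 : q ^ 2 * u1 = X R * q - R * X q := by rw [h1]; field_simp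
  have r2 : q ^ 2 * u2 = X (Y q) * q - X q * Y q := by rw [h2]; field_simp
  have r3 : q ^ 4 * u3 = (X (X R) * q - R * X (X q)) * q ^ 2
      - (X R * q - R * X q) * (2 * q * X q) := by rw [h3]; field_simp
  have r4 : q ^ 4 * u4 = (X (Y R) * q + X R * Y q - Y R * X q - R * X (Y q)) * q ^ 2
      - (X R * q - R * X q) * (2 * q * Y q) := by rw [h4]; field_simp
  have r5 : q ^ 4 * u5 = (X (X (Y q)) * q + X (Y q) * X q - X (X q) * Y q
      - X q * X (Y q)) * q ^ 2
      - (X (Y q) * q - X q * Y q) * (2 * q * X q) := by rw [h5]; field_simp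
  have r6 : 4 * q ^ 2 * u6 = 2 * R * X R * (2 * q) - R ^ 2 * (2 * X q) := by
    rw [h6]; field_simp; ring
  have r7 : 4 * q ^ 2 * u7 = 2 * R * Y R * (2 * q) - R ^ 2 * (2 * Y q) := by
    rw [h7]; field_simp; ring
  constructor
  · rintro ⟨hS1, hS2⟩
    have hS1' : q * q * Y R + X q * R + Y q * X q
        = q * q * m + q * q * m + q * X R + X (Y q) * q := by linear_combination hS1
    have hX := congrArg (⇑X) hS1'
    simp only [map_add, Derivation.leibniz, smul_eq_mul] at hX
    refine ⟨?_, ?_⟩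
    · have k1 : q ^ 2 * (2 * m - Y R + u1 + u2) = 0 := by
        linear_combination r1 + r2 - hS1
      have k1' := (mul_eq_zero.mp k1).resolve_left (pow_ne_zero 2 hq)
      linear_combination k1'
    · have k2 : q ^ 4 * ((2 * X h + u3 - u6 + q * (2 * Y h + u4 - u7)
          + (Y q - P) * (2 * h + u1 - w)) - (P * u2 - u5)) = 0 := by
        linear_combination (-2 * q ^ 3) * hS2 + ((R * q + 3 * X q) * q) * hS1
          + (-(q ^ 2)) * hX
          + r3 + q * r4 + r5 + (-(q ^ 2 / 4)) * r6 + (-(q ^ 3 / 4)) * r7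
          + (q ^ 2 * (Y q - P)) * r1 + (-(q ^ 2 * P)) * r2
          + (q ^ 3 / 2 * (P - Y q)) * r0
          + (q * X q * Y q + q * R * X q - q ^ 2 * X (Y q) - q ^ 2 * X R
              + q ^ 2 * R ^ 2 / 2 - 2 * q ^ 3 * h) * rP
      have k2' := (mul_eq_zero.mp k2).resolve_left (pow_ne_zero 4 hq)
      linear_combination k2'
  · rintro ⟨hE2, hE3⟩
    have hS1 : -2 * q ^ 2 * m + q ^ 2 * Y R + X q * R + Y q * X q - q * X R
        - X (Y q) * q = 0 := by
      linear_combination (-(q ^ 2)) * hE2 + r1 + r2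
    have hS1' : q * q * Y R + X q * R + Y q * X q
        = q * q * m + q * q * m + q * X R + X (Y q) * q := by linear_combination hS1
    have hX := congrArg (⇑X) hS1'
    simp only [map_add, Derivation.leibniz, smul_eq_mul] at hX
    refine ⟨hS1, ?_⟩
    have k3 : 2 * q ^ 3 * (X q * h - q * X h - q ^ 2 * Y h - X q * m + X q * Y R
        + q * X m - q * X (Y R) - Y q * q * h - q * R * m + q * R * Y R) = 0 := by
      linear_combination (-(q ^ 4)) * hE3 + ((R * q + 3 * X q) * q) * hS1
        + (-(q ^ 2)) * hX
        + r3 + q * r4 + r5 + (-(q ^ 2 / 4)) * r6 + (-(q ^ 3 / 4)) * r7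
        + (q ^ 2 * (Y q - P)) * r1 + (-(q ^ 2 * P)) * r2
        + (q ^ 3 / 2 * (P - Y q)) * r0
        + (q * X q * Y q + q * R * X q - q ^ 2 * X (Y q) - q ^ 2 * X R
            + q ^ 2 * R ^ 2 / 2 - 2 * q ^ 3 * h) * rP
    have k3' := (mul_eq_zero.mp k3).resolve_left
      (mul_ne_zero two_ne_zero (pow_ne_zero 3 hq))
    linear_combination k3'
end

section
/- Let z, w, φ ∈ K with z_x ≠ 0, z_y ≠ 0, φ ≠ 0, and suppose w_x = φ·z_x and w_y = φ·z_y (that is, w plays the role of F(z) for an arbitrary function F with F' = φ). Set q = −z_x/z_y. Then −w_x/w_y = q, and I3 = I30(w) := −w_xxy/w_x + w_xx·w_xy/w_x² + w_xy²/(2·w_x·w_y) satisfies equation (E3): ∂x(I3) + q·∂y(I3) + (q_y − q_x/q)·I3 = (q_x/q)·∂y(q_x/q) − ∂x(∂y(q_x/q)). -/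
set_option maxHeartbeats 2000000 in
/-- Another large class of particular solutions of (E3): if `w` plays the
role of `F(z)` (i.e. `w_x = φ z_x`, `w_y = φ z_y` for some `φ ≠ 0`), then
`−w_x/w_y = q` and `I3 = I30(w)` still satisfies equation (E3) with
`q = −z_x/z_y`. -/
theorem particular_solution_I30_of_F {K : Type*} [Field K] [CharZero K]
    (X Y : Derivation ℚ K K) (hcomm : ∀ f : K, X (Y f) = Y (X f))
    (z w φ : K) (hzx : X z ≠ 0) (hzy : Y z ≠ 0) (hφ : φ ≠ 0)
    (hwx : X w = φ * X z) (hwy : Y w = φ * Y z)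
    (q I3 : K)
    (hq : q = -(X z) / Y z)
    (hI3 : I3 = -(X (X (Y w))) / X w + X (X w) * X (Y w) / (X w) ^ 2
        + (X (Y w)) ^ 2 / (2 * X w * Y w)) :
    -(X w) / Y w = q ∧
    X I3 + q * Y I3 + (Y q - X q / q) * I3
      = (X q / q) * Y (X q / q) - X (Y (X q / q)) := by
  have hwx0 : X w ≠ 0 := by rw [hwx]; exact mul_ne_zero hφ hzx
  have hwy0 : Y w ≠ 0 := by rw [hwy]; exact mul_ne_zero hφ hzy
  have hq' : q = -(X w) / Y w := by
    rw [hq, hwx, hwy]; field_simp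
  refine ⟨hq'.symm, ?_⟩
  have h2 : ∀ D : Derivation ℚ K K, D (2:K) = 0 := fun D => by
    rw [show (2:K) = ((2:ℕ):K) by norm_num]; exact D.map_natCast 2
  have Ddiv : ∀ (D : Derivation ℚ K K) (u v : K), v ≠ 0 →
      D (u / v) = (D u * v - u * D v) / v ^ 2 := by
    intro D u v hv
    rw [Derivation.leibniz_div]
    simp only [smul_eq_mul, smul_sub]
    field_simp
  have h40 : (4 : K) ≠ 0 := by norm_num
  have h20 : (2 : K) ≠ 0 := two_ne_zero
  have hab0 : X w * Y w ≠ 0 := mul_ne_zero hwx0 hwy0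
  have hb20 : (Y w) ^ 2 ≠ 0 := pow_ne_zero 2 hwy0
  have ha2b20 : (X w) ^ 2 * (Y w) ^ 2 ≠ 0 :=
    mul_ne_zero (pow_ne_zero 2 hwx0) (pow_ne_zero 2 hwy0)
  have h2ab0 : (2 : K) * X w * Y w ≠ 0 := mul_ne_zero (mul_ne_zero h20 hwx0) hwy0
  have h2a2b0 : (2 : K) * (X w) ^ 2 * Y w ≠ 0 :=
    mul_ne_zero (mul_ne_zero h20 (pow_ne_zero 2 hwx0)) hwy0
  have hD0 : (4 : K) * (X w) ^ 4 * (Y w) ^ 4 ≠ 0 :=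
    mul_ne_zero (mul_ne_zero h40 (pow_ne_zero 4 hwx0)) (pow_ne_zero 4 hwy0)
  have hD20 : (4 : K) * (X w) ^ 4 * (Y w) ^ 2 ≠ 0 :=
    mul_ne_zero (mul_ne_zero h40 (pow_ne_zero 4 hwx0)) (pow_ne_zero 2 hwy0)
  have hXq : X q = (X w * Y (X w) - Y w * X (X w)) / (Y w) ^ 2 := by
    rw [hq', Ddiv X _ _ hwy0, map_neg, hcomm w]
    rw [← sub_eq_zero]
    field_simp
    first
    | ring
    | (rw [sub_eq_zero, eq_div_iff (by simp [hwx0, hwy0])]; ring)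
    | (rw [sub_eq_zero, div_eq_iff (by simp [hwx0, hwy0])]; ring)
    | (rw [sub_eq_zero]; ring)
  have hYq : Y q = (-(Y w) * (Y (X w)) + (X w) * (Y (Y w))) / (Y w) ^ 2 := by
    rw [hq', Ddiv Y _ _ hwy0, map_neg]
    rw [← sub_eq_zero]
    field_simp
    first
    | ring
    | (rw [sub_eq_zero, eq_div_iff (by simp [hwx0, hwy0])]; ring)
    | (rw [sub_eq_zero, div_eq_iff (by simp [hwx0, hwy0])]; ring)
    | (rw [sub_eq_zero]; ring)
  have hA : X q / q = ((Y w) * (X (X w)) - (X w) * (Y (X w))) / (X w * Y w) := by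
    rw [hXq, hq']
    rw [← sub_eq_zero]
    field_simp
    first
    | ring
    | (rw [sub_eq_zero, eq_div_iff (by simp [hwx0, hwy0])]; ring)
    | (rw [sub_eq_zero, div_eq_iff (by simp [hwx0, hwy0])]; ring)
    | (rw [sub_eq_zero]; ring)
  have hI3' : I3 = -(Y (X (X w))) / X w + X (X w) * Y (X w) / (X w) ^ 2
      + (Y (X w)) ^ 2 / (2 * X w * Y w) := by
    simp only [hI3, hcomm]
  have hI3c : I3 = (2 * (Y w) * (X (X w)) * (Y (X w)) + (X w) * (Y (X w)) ^ 2 - 2 * (X w) * (Y w) * (Y (X (X w)))) / (2 * (X w) ^ 2 * Y w) := by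
    rw [hI3', div_add_div _ _ hwx0 (pow_ne_zero 2 hwx0),
      div_add_div _ _ (mul_ne_zero hwx0 (pow_ne_zero 2 hwx0)) h2ab0,
      div_eq_div_iff (mul_ne_zero (mul_ne_zero hwx0 (pow_ne_zero 2 hwx0)) h2ab0) h2a2b0]
    ring
  have hYA : Y (X q / q) = (-(Y w) ^ 2 * (X (X w)) * (Y (X w)) + (X w) * (Y w) ^ 2 * (Y (X (X w))) + (X w) ^ 2 * (Y (X w)) * (Y (Y w)) - (X w) ^ 2 * (Y w) * (Y (Y (X w)))) / ((X w) ^ 2 * (Y w) ^ 2) := by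
    rw [hA, Ddiv Y _ _ hab0]
    simp only [map_sub, map_add, map_neg, Derivation.leibniz, Derivation.leibniz_pow, smul_eq_mul, nsmul_eq_mul, Nat.cast_ofNat, h2, hcomm, mul_zero, zero_mul, add_zero, zero_add]
    rw [div_eq_div_iff (pow_ne_zero 2 hab0) ha2b20]
    ring
  have S5 : X (Y (X q / q)) = (8 * (X w) * (Y w) ^ 4 * (X (X w)) ^ 2 * (Y (X w)) - 4 * (X w) ^ 2 * (Y w) ^ 4 * (Y (X w)) * (X (X (X w))) - 8 * (X w) ^ 2 * (Y w) ^ 4 * (X (X w)) * (Y (X (X w))) + 4 * (X w) ^ 3 * (Y w) ^ 4 * (Y (X (X (X w)))) - 8 * (X w) ^ 4 * (Y w) * (Y (X w)) ^ 2 * (Y (Y w)) + 4 * (X w) ^ 4 * (Y w) ^ 2 * (Y (Y w)) * (Y (X (X w))) + 8 * (X w) ^ 4 * (Y w) ^ 2 * (Y (X w)) * (Y (Y (X w))) - 4 * (X w) ^ 4 * (Y w) ^ 3 * (Y (Y (X (X w))))) / (4 * (X w) ^ 4 * (Y w) ^ 4) := by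
    rw [hYA, Ddiv X _ _ ha2b20]
    simp only [map_sub, map_add, map_neg, Derivation.leibniz, Derivation.leibniz_pow, smul_eq_mul, nsmul_eq_mul, Nat.cast_ofNat, h2, hcomm, mul_zero, zero_mul, add_zero, zero_add]
    rw [div_eq_div_iff (pow_ne_zero 2 ha2b20) hD0]
    ring
  have S1 : X I3 = (-8 * (X w) * (Y w) ^ 4 * (X (X w)) ^ 2 * (Y (X w)) - 2 * (X w) ^ 2 * (Y w) ^ 3 * (X (X w)) * (Y (X w)) ^ 2 + 4 * (X w) ^ 2 * (Y w) ^ 4 * (Y (X w)) * (X (X (X w))) + 8 * (X w) ^ 2 * (Y w) ^ 4 * (X (X w)) * (Y (X (X w))) - 2 * (X w) ^ 3 * (Y w) ^ 2 * (Y (X w)) ^ 3 + 4 * (X w) ^ 3 * (Y w) ^ 3 * (Y (X w)) * (Y (X (X w))) - 4 * (X w) ^ 3 * (Y w) ^ 4 * (Y (X (X (X w))))) / (4 * (X w) ^ 4 * (Y w) ^ 4) := by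
    rw [hI3c, Ddiv X _ _ h2a2b0]
    simp only [map_sub, map_add, map_neg, Derivation.leibniz, Derivation.leibniz_pow, smul_eq_mul, nsmul_eq_mul, Nat.cast_ofNat, h2, hcomm, mul_zero, zero_mul, add_zero, zero_add]
    rw [div_eq_div_iff (pow_ne_zero 2 h2a2b0) hD0]
    ring
  have hYI3 : Y I3 = (-8 * (X w) * (Y w) ^ 2 * (X (X w)) * (Y (X w)) ^ 2 - 2 * (X w) ^ 2 * (Y w) * (Y (X w)) ^ 3 + 8 * (X w) ^ 2 * (Y w) ^ 2 * (Y (X w)) * (Y (X (X w))) + 4 * (X w) ^ 2 * (Y w) ^ 2 * (X (X w)) * (Y (Y (X w))) - 2 * (X w) ^ 3 * (Y (X w)) ^ 2 * (Y (Y w)) + 4 * (X w) ^ 3 * (Y w) * (Y (X w)) * (Y (Y (X w))) - 4 * (X w) ^ 3 * (Y w) ^ 2 * (Y (Y (X (X w))))) / (4 * (X w) ^ 4 * (Y w) ^ 2) := by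
    rw [hI3c, Ddiv Y _ _ h2a2b0]
    simp only [map_sub, map_add, map_neg, Derivation.leibniz, Derivation.leibniz_pow, smul_eq_mul, nsmul_eq_mul, Nat.cast_ofNat, h2, hcomm, mul_zero, zero_mul, add_zero, zero_add]
    rw [div_eq_div_iff (pow_ne_zero 2 h2a2b0) hD20]
    ring
  have S2 : q * Y I3 = (8 * (X w) ^ 2 * (Y w) ^ 3 * (X (X w)) * (Y (X w)) ^ 2 + 2 * (X w) ^ 3 * (Y w) ^ 2 * (Y (X w)) ^ 3 - 8 * (X w) ^ 3 * (Y w) ^ 3 * (Y (X w)) * (Y (X (X w))) - 4 * (X w) ^ 3 * (Y w) ^ 3 * (X (X w)) * (Y (Y (X w))) + 2 * (X w) ^ 4 * (Y w) * (Y (X w)) ^ 2 * (Y (Y w)) - 4 * (X w) ^ 4 * (Y w) ^ 2 * (Y (X w)) * (Y (Y (X w))) + 4 * (X w) ^ 4 * (Y w) ^ 3 * (Y (Y (X (X w))))) / (4 * (X w) ^ 4 * (Y w) ^ 4) := by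
    rw [hq', hYI3, div_mul_div_comm,
      div_eq_div_iff (mul_ne_zero hwy0 hD20) hD0]
    ring
  have S3 : (Y q - X q / q) * I3 = (-4 * (X w) * (Y w) ^ 4 * (X (X w)) ^ 2 * (Y (X w)) - 2 * (X w) ^ 2 * (Y w) ^ 3 * (X (X w)) * (Y (X w)) ^ 2 + 4 * (X w) ^ 2 * (Y w) ^ 4 * (X (X w)) * (Y (X (X w))) + 4 * (X w) ^ 3 * (Y w) ^ 2 * (X (X w)) * (Y (X w)) * (Y (Y w)) + 2 * (X w) ^ 4 * (Y w) * (Y (X w)) ^ 2 * (Y (Y w)) - 4 * (X w) ^ 4 * (Y w) ^ 2 * (Y (Y w)) * (Y (X (X w)))) / (4 * (X w) ^ 4 * (Y w) ^ 4) := by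
    rw [hYq, hA, hI3c, div_sub_div _ _ hb20 hab0, div_mul_div_comm,
      div_eq_div_iff (mul_ne_zero (mul_ne_zero hb20 hab0) h2a2b0) hD0]
    ring
  have S4 : (X q / q) * Y (X q / q) = (-4 * (X w) * (Y w) ^ 4 * (X (X w)) ^ 2 * (Y (X w)) + 4 * (X w) ^ 2 * (Y w) ^ 3 * (X (X w)) * (Y (X w)) ^ 2 + 4 * (X w) ^ 2 * (Y w) ^ 4 * (X (X w)) * (Y (X (X w))) + 4 * (X w) ^ 3 * (Y w) ^ 2 * (X (X w)) * (Y (X w)) * (Y (Y w)) - 4 * (X w) ^ 3 * (Y w) ^ 3 * (Y (X w)) * (Y (X (X w))) - 4 * (X w) ^ 3 * (Y w) ^ 3 * (X (X w)) * (Y (Y (X w))) - 4 * (X w) ^ 4 * (Y w) * (Y (X w)) ^ 2 * (Y (Y w)) + 4 * (X w) ^ 4 * (Y w) ^ 2 * (Y (X w)) * (Y (Y (X w)))) / (4 * (X w) ^ 4 * (Y w) ^ 4) := by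
    rw [hYA, hA, div_mul_div_comm, div_eq_div_iff (mul_ne_zero hab0 ha2b20) hD0]
    ring
  rw [S1, S2, S3, S4, S5, ← add_div, ← add_div, ← sub_div,
    div_eq_div_iff hD0 hD0]
  ring
end

section
/- Let z, w ∈ K with z_x ≠ 0 and z_y ≠ 0, and suppose w_x·z_y = w_y·z_x (that is, w is a function of z). Then I = w·z_x·z_y satisfies the homogeneous equation I·(z_xx/z_x − z_x·z_yy/z_y²) − I_x + (z_x/z_y)·I_y = 0, which is the homogeneous part of the invariant equation (E3) written with q = −z_x/z_y. -/
/-- If `w` is a function of `z` (i.e. `w_x z_y = w_y z_x`), then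
`I = w z_x z_y` satisfies the homogeneous part of the invariant equation
(E3): `I (z_xx/z_x − z_x z_yy/z_y²) − I_x + (z_x/z_y) I_y = 0`. -/
theorem homogeneous_solution {K : Type*} [Field K] [CharZero K]
    (X Y : Derivation ℚ K K) (hcomm : ∀ f : K, X (Y f) = Y (X f))
    (z w : K) (hzx : X z ≠ 0) (hzy : Y z ≠ 0)
    (hw : X w * Y z = Y w * X z)
    (I : K) (hI : I = w * X z * Y z) :
    I * (X (X z) / X z - X z * Y (Y z) / (Y z) ^ 2) - X I
      + (X z / Y z) * Y I = 0 := by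
  subst hI
  have h := hcomm z
  simp only [Derivation.leibniz, smul_eq_mul]
  field_simp
  ring_nf
  linear_combination (-(X z * Y z)) * hw - w * X z * Y z * h
end

section
/- Let z, I ∈ K with z_x ≠ 0 and z_y ≠ 0, and suppose I satisfies the homogeneous equation I·(z_xx/z_x − z_x·z_yy/z_y²) − I_x + (z_x/z_y)·I_y = 0. Then w := I/(z_x·z_y) satisfies w_x·z_y = w_y·z_x (that is, every solution of the homogeneous equation has the form w·z_x·z_y with w a function of z). -/
/-- Every solution of the homogeneous equation has the form `w z_x z_y` with
`w` a function of `z`: if `I` satisfies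
`I (z_xx/z_x − z_x z_yy/z_y²) − I_x + (z_x/z_y) I_y = 0`, then
`w := I/(z_x z_y)` satisfies `w_x z_y = w_y z_x`. -/
theorem homogeneous_solution_converse {K : Type*} [Field K] [CharZero K]
    (X Y : Derivation ℚ K K) (hcomm : ∀ f : K, X (Y f) = Y (X f))
    (z I : K) (hzx : X z ≠ 0) (hzy : Y z ≠ 0)
    (hhom : I * (X (X z) / X z - X z * Y (Y z) / (Y z) ^ 2) - X I
        + (X z / Y z) * Y I = 0)
    (w : K) (hw : w = I / (X z * Y z)) :
    X w * Y z = Y w * X z := by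
  have hI : I = w * (X z * Y z) := by
    rw [hw]; field_simp
  rw [hI] at hhom
  simp only [Derivation.leibniz, smul_eq_mul, hcomm z] at hhom
  field_simp at hhom
  have key : (X w * Y z - Y w * X z) * (X z ^ 2 * Y z ^ 3) = 0 := by
    linear_combination (-(X z * Y z ^ 2)) * hhom
  have hne : X z ^ 2 * Y z ^ 3 ≠ 0 := mul_ne_zero (pow_ne_zero _ hzx) (pow_ne_zero _ hzy)
  have := mul_eq_zero.mp key
  rcases this with h | h
  · exact sub_eq_zero.mp h
  · exact absurd h hne
end
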